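/- arXiv:0807.1416 — 2 statements merged into one kernel-verified Lean document; each statement's English description precedes it below -/
import Mathlib

section
/- Monotone Lipschitz approximation of a continuous generator: fix T > 0, integers n, d ≥ 1 and compact metric spaces A and B. Let f̃ : [0,T]×ℝⁿ×ℝ×ℝ^d×A×B → ℝ be bounded and continuous, and suppose there is R > 0 such that f̃(t,x,y,z,α,β) = 0 whenever |y| > R. Then there exists a sequence (f^p)_{p≥1} of bounded continuous functions [0,T]×ℝⁿ×ℝ×ℝ^d×A×B → ℝ such that: (a) each f^p is Lipschitz in (x,y,z) uniformly with respect to (t,α,β), i.e. there is L_p > 0 with |f^p(t,x,y,z,α,β) − f^p(t,x',y',z',α,β)| ≤ L_p(|x−x'| + |y−y'| + |z−z'|) for all arguments; (b) f^{p+1} ≤ f^p and f^p ≥ f̃ pointwise; (c) f^p converges to f̃ uniformly on compact subsets of [0,T]×ℝⁿ×ℝ×ℝ^d×A×B. -/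
open Set Filter Topology

noncomputable section

/-- Euclidean space `ℝⁿ`. -/
abbrev En (n : ℕ) : Type := EuclideanSpace ℝ (Fin n)

/-- Frobenius norm of a matrix. -/
noncomputable def frobNorm {n d : ℕ} (M : Matrix (Fin n) (Fin d) ℝ) : ℝ :=
  Real.sqrt (∑ i, ∑ j, (M i j) ^ 2)

/-- Row vector `q` multiplied by the matrix `M`. -/
def rowMul {n d : ℕ} (q : En n) (M : Matrix (Fin n) (Fin d) ℝ) : En d :=
  WithLp.toLp 2 (fun j => ∑ i, q i * M i j)

/-- The lower Hamiltonian `H⁻ = sup_α inf_β [½Tr(σσᵀX) + ⟨b,q⟩ + f(t,x,r,qσ,α,β)]`,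
for a generic generator `f`. -/
noncomputable def Hinf {n d : ℕ} (A B : Type)
    (b : ℝ → En n → A → B → En n)
    (σm : ℝ → En n → A → B → Matrix (Fin n) (Fin d) ℝ)
    (f : ℝ → En n → ℝ → En d → A → B → ℝ)
    (t : ℝ) (x : En n) (r : ℝ) (q : En n) (X : Matrix (Fin n) (Fin n) ℝ) : ℝ :=
  ⨆ α : A, ⨅ β : B,
    (1 / 2) * Matrix.trace (σm t x α β * (σm t x α β).transpose * X)
      + (inner ℝ (b t x α β) q : ℝ)
      + f t x r (rowMul q (σm t x α β)) α β

/-- The upper Hamiltonian `H⁺ = inf_β sup_α [...]`. -/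
noncomputable def Hsup {n d : ℕ} (A B : Type)
    (b : ℝ → En n → A → B → En n)
    (σm : ℝ → En n → A → B → Matrix (Fin n) (Fin d) ℝ)
    (f : ℝ → En n → ℝ → En d → A → B → ℝ)
    (t : ℝ) (x : En n) (r : ℝ) (q : En n) (X : Matrix (Fin n) (Fin n) ℝ) : ℝ :=
  ⨅ β : B, ⨆ α : A,
    (1 / 2) * Matrix.trace (σm t x α β * (σm t x α β).transpose * X)
      + (inner ℝ (b t x α β) q : ℝ)
      + f t x r (rowMul q (σm t x α β)) α β

/-- `φ` is of class `C^{1,2}` on `[0,T)×ℝⁿ`, with time derivative `φt`,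
spatial gradient `Dφ` and spatial Hessian `D2φ`, all continuous on `[0,T)×ℝⁿ`. -/
structure IsC12 (T : ℝ) {n : ℕ} (φ φt : ℝ → En n → ℝ) (Dφ : ℝ → En n → En n)
    (D2φ : ℝ → En n → Matrix (Fin n) (Fin n) ℝ) : Prop where
  cont : ContinuousOn (fun p : ℝ × En n => φ p.1 p.2) (Ico 0 T ×ˢ univ)
  cont_t : ContinuousOn (fun p : ℝ × En n => φt p.1 p.2) (Ico 0 T ×ˢ univ)
  cont_D : ContinuousOn (fun p : ℝ × En n => Dφ p.1 p.2) (Ico 0 T ×ˢ univ)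
  cont_D2 : ContinuousOn (fun p : ℝ × En n => D2φ p.1 p.2) (Ico 0 T ×ˢ univ)
  deriv_t : ∀ t ∈ Ico (0 : ℝ) T, ∀ x : En n,
    HasDerivWithinAt (fun s => φ s x) (φt t x) (Ico 0 T) t
  grad_x : ∀ t ∈ Ico (0 : ℝ) T, ∀ x : En n, HasGradientAt (fun y => φ t y) (Dφ t x) x
  hess_x : ∀ t ∈ Ico (0 : ℝ) T, ∀ x : En n,
    HasFDerivAt (fun y => Dφ t y)
      (LinearMap.toContinuousLinearMap (Matrix.toEuclideanLin (D2φ t x))) x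

/-- `u` is a viscosity subsolution of the obstacle equation
`min{u-ℓ, max{-∂u/∂t - H(t,x,u,Du,D²u), u-ℓ'}} = 0` on `[0,T)×ℝⁿ`, `u(T,·) = G`. -/
def IsSubsolution (T : ℝ) {n : ℕ}
    (H : ℝ → En n → ℝ → En n → Matrix (Fin n) (Fin n) ℝ → ℝ)
    (ℓ ℓ' : ℝ → En n → ℝ) (G : En n → ℝ) (u : ℝ → En n → ℝ) : Prop :=
  UpperSemicontinuousOn (fun p : ℝ × En n => u p.1 p.2) (Icc 0 T ×ˢ univ)
  ∧ (∀ x : En n, u T x ≤ G x)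
  ∧ ∀ (φ φt : ℝ → En n → ℝ) (Dφ : ℝ → En n → En n)
      (D2φ : ℝ → En n → Matrix (Fin n) (Fin n) ℝ),
      IsC12 T φ φt Dφ D2φ →
      ∀ t ∈ Ico (0 : ℝ) T, ∀ x : En n,
        (∀ s ∈ Ico (0 : ℝ) T, ∀ y : En n, u s y - φ s y ≤ u t x - φ t x) →
        min (u t x - ℓ t x)
          (max (-(φt t x) - H t x (u t x) (Dφ t x) (D2φ t x)) (u t x - ℓ' t x)) ≤ 0

/-- `u` is a viscosity supersolution of the obstacle equation. -/
def IsSupersolution (T : ℝ) {n : ℕ}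
    (H : ℝ → En n → ℝ → En n → Matrix (Fin n) (Fin n) ℝ → ℝ)
    (ℓ ℓ' : ℝ → En n → ℝ) (G : En n → ℝ) (u : ℝ → En n → ℝ) : Prop :=
  LowerSemicontinuousOn (fun p : ℝ × En n => u p.1 p.2) (Icc 0 T ×ˢ univ)
  ∧ (∀ x : En n, G x ≤ u T x)
  ∧ ∀ (φ φt : ℝ → En n → ℝ) (Dφ : ℝ → En n → En n)
      (D2φ : ℝ → En n → Matrix (Fin n) (Fin n) ℝ),
      IsC12 T φ φt Dφ D2φ →
      ∀ t ∈ Ico (0 : ℝ) T, ∀ x : En n,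
        (∀ s ∈ Ico (0 : ℝ) T, ∀ y : En n, u t x - φ t x ≤ u s y - φ s y) →
        0 ≤ min (u t x - ℓ t x)
          (max (-(φt t x) - H t x (u t x) (Dφ t x) (D2φ t x)) (u t x - ℓ' t x))

/-- Hypothesis (H1): continuity of `b`, `σ` on `[0,T]×ℝⁿ×A×B` and uniform
Lipschitz continuity in `x`. -/
def HypH1 {n d : ℕ} (T : ℝ) (A B : Type) [TopologicalSpace A] [TopologicalSpace B]
    (b : ℝ → En n → A → B → En n)
    (σm : ℝ → En n → A → B → Matrix (Fin n) (Fin d) ℝ) : Prop :=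
  ContinuousOn (fun p : ℝ × En n × A × B => b p.1 p.2.1 p.2.2.1 p.2.2.2)
      (Icc 0 T ×ˢ (univ : Set (En n × A × B)))
  ∧ ContinuousOn (fun p : ℝ × En n × A × B => σm p.1 p.2.1 p.2.2.1 p.2.2.2)
      (Icc 0 T ×ˢ (univ : Set (En n × A × B)))
  ∧ ∃ CL > (0 : ℝ), ∀ t ∈ Icc (0 : ℝ) T, ∀ (x x' : En n) (α : A) (β : B),
      ‖b t x α β - b t x' α β‖ + frobNorm (σm t x α β - σm t x' α β) ≤ CL * ‖x - x'‖

/-- Hypothesis (H2): `g`, `h`, `h'` continuous and bounded, `h < h'`,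
`h(T,·) ≤ g ≤ h'(T,·)`; `F` continuous with quadratic growth in `z`
with constant `C`. -/
def HypH2 {n d : ℕ} (T C : ℝ) (A B : Type) [TopologicalSpace A] [TopologicalSpace B]
    (g : En n → ℝ) (h h' : ℝ → En n → ℝ)
    (F : ℝ → En n → ℝ → En d → A → B → ℝ) : Prop :=
  Continuous g ∧ (∃ M, ∀ x : En n, |g x| ≤ M)
  ∧ ContinuousOn (fun p : ℝ × En n => h p.1 p.2) (Icc 0 T ×ˢ univ)
  ∧ ContinuousOn (fun p : ℝ × En n => h' p.1 p.2) (Icc 0 T ×ˢ univ)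
  ∧ (∃ M, ∀ t ∈ Icc (0 : ℝ) T, ∀ x : En n, |h t x| ≤ M ∧ |h' t x| ≤ M)
  ∧ (∀ t ∈ Icc (0 : ℝ) T, ∀ x : En n, h t x < h' t x)
  ∧ (∀ x : En n, h T x ≤ g x ∧ g x ≤ h' T x)
  ∧ ContinuousOn
      (fun p : ℝ × En n × ℝ × En d × A × B =>
        F p.1 p.2.1 p.2.2.1 p.2.2.2.1 p.2.2.2.2.1 p.2.2.2.2.2)
      (Icc 0 T ×ˢ (univ : Set (En n × ℝ × En d × A × B)))
  ∧ 0 < C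
  ∧ ∀ t ∈ Icc (0 : ℝ) T, ∀ (x : En n) (y : ℝ) (z : En d) (α : A) (β : B),
      |F t x y z α β| ≤ C * (1 + ‖z‖ ^ 2)

/-- Hypothesis (H3): `F` is differentiable in `(x,y,z)`, with
`|∂F/∂x|, |∂F/∂z| ≤ C(1+|z|²)` and `∂F/∂y ≤ C_ε + ε|z|²` for every `ε > 0`. -/
def HypH3 {n d : ℕ} (T C : ℝ) (A B : Type)
    (F : ℝ → En n → ℝ → En d → A → B → ℝ) : Prop :=
  ∃ (Fx : ℝ → En n → ℝ → En d → A → B → En n)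
    (Fy : ℝ → En n → ℝ → En d → A → B → ℝ)
    (Fz : ℝ → En n → ℝ → En d → A → B → En d),
    (∀ t ∈ Icc (0 : ℝ) T, ∀ (x : En n) (y : ℝ) (z : En d) (α : A) (β : B),
      HasGradientAt (fun x' => F t x' y z α β) (Fx t x y z α β) x
      ∧ HasDerivAt (fun y' => F t x y' z α β) (Fy t x y z α β) y
      ∧ HasGradientAt (fun z' => F t x y z' α β) (Fz t x y z α β) z
      ∧ ‖Fx t x y z α β‖ ≤ C * (1 + ‖z‖ ^ 2)
      ∧ ‖Fz t x y z α β‖ ≤ C * (1 + ‖z‖ ^ 2))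
    ∧ ∀ ε > (0 : ℝ), ∃ Cε > (0 : ℝ), ∀ t ∈ Icc (0 : ℝ) T,
        ∀ (x : En n) (y : ℝ) (z : En d) (α : A) (β : B),
          Fy t x y z α β ≤ Cε + ε * ‖z‖ ^ 2

/-- The function `ρ(x) = (1/λ) ln((e^{λγx}+1)/γ)`. -/
noncomputable def rho (γ lam : ℝ) (x : ℝ) : ℝ :=
  (1 / lam) * Real.log ((Real.exp (lam * γ * x) + 1) / γ)

/-- `ρ'`. -/
noncomputable def rho' (γ lam : ℝ) : ℝ → ℝ := deriv (rho γ lam)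

/-- `ρ''`. -/
noncomputable def rho'' (γ lam : ℝ) : ℝ → ℝ := deriv (rho' γ lam)

/-- The transformed generator
`F̄(t,x,ū,z̄) = (ρ''(ū)/ρ'(ū))|z̄|² − Kρ(ū)/ρ'(ū) + (e^{Kt}/ρ'(ū)) F(t,x,e^{−Kt}ρ(ū)+C̃,e^{−Kt}ρ'(ū)z̄)`. -/
noncomputable def Fbar {n d : ℕ} {A B : Type} (γ lam K Ct : ℝ)
    (F : ℝ → En n → ℝ → En d → A → B → ℝ)
    (t : ℝ) (x : En n) (ub : ℝ) (zb : En d) (α : A) (β : B) : ℝ :=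
  (rho'' γ lam ub / rho' γ lam ub) * ‖zb‖ ^ 2
    - K * rho γ lam ub / rho' γ lam ub
    + (Real.exp (K * t) / rho' γ lam ub)
      * F t x (Real.exp (-(K * t)) * rho γ lam ub + Ct)
          ((Real.exp (-(K * t)) * rho' γ lam ub) • zb) α β

/-- The change of variable `ū(t,x) = ρ⁻¹(e^{Kt}(u(t,x) − C̃))`. -/
noncomputable def transf {n : ℕ} (γ lam K Ct : ℝ) (u : ℝ → En n → ℝ) : ℝ → En n → ℝ :=
  fun t x => Function.invFun (rho γ lam) (Real.exp (K * t) * (u t x - Ct))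

/-- `(p,q,X)` belongs to the second-order parabolic superjet `𝒫^{2,+}u(t₀,x₀)`. -/
def ParabSuperjet (T : ℝ) {n : ℕ} (u : ℝ → En n → ℝ) (t0 : ℝ) (x0 : En n)
    (p : ℝ) (q : En n) (X : Matrix (Fin n) (Fin n) ℝ) : Prop :=
  X.IsSymm ∧
  ∀ ε > (0 : ℝ), ∃ δ > (0 : ℝ), ∀ t ∈ Ico (0 : ℝ) T, ∀ x : En n,
    |t - t0| < δ → ‖x - x0‖ < δ →
    u t x ≤ u t0 x0 + p * (t - t0) + (inner ℝ q (x - x0) : ℝ)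
      + (1 / 2) * (inner ℝ (Matrix.toEuclideanLin X (x - x0)) (x - x0) : ℝ)
      + ε * (|t - t0| + ‖x - x0‖ ^ 2)

/-- The parabolic subjet `𝒫^{2,−}u = −𝒫^{2,+}(−u)`. -/
def ParabSubjet (T : ℝ) {n : ℕ} (u : ℝ → En n → ℝ) (t0 : ℝ) (x0 : En n)
    (p : ℝ) (q : En n) (X : Matrix (Fin n) (Fin n) ℝ) : Prop :=
  ParabSuperjet T (fun t x => -(u t x)) t0 x0 (-p) (-q) (-X)

/-- The closure `𝒫̄^{2,+}u(t₀,x₀)` of the parabolic superjet. -/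
def ClosedParabSuperjet (T : ℝ) {n : ℕ} (u : ℝ → En n → ℝ) (t0 : ℝ) (x0 : En n)
    (p : ℝ) (q : En n) (X : Matrix (Fin n) (Fin n) ℝ) : Prop :=
  ∃ (tk : ℕ → ℝ) (xk : ℕ → En n) (pk : ℕ → ℝ) (qk : ℕ → En n)
    (Xk : ℕ → Matrix (Fin n) (Fin n) ℝ),
    (∀ k, tk k ∈ Ico (0 : ℝ) T ∧ ParabSuperjet T u (tk k) (xk k) (pk k) (qk k) (Xk k))
    ∧ Tendsto tk atTop (nhds t0) ∧ Tendsto xk atTop (nhds x0)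
    ∧ Tendsto (fun k => u (tk k) (xk k)) atTop (nhds (u t0 x0))
    ∧ Tendsto pk atTop (nhds p) ∧ Tendsto qk atTop (nhds q)
    ∧ Tendsto Xk atTop (nhds X)

/-- The doubled and penalized function
`Ψ_{ε,η}(t,x,y) = ū(t,x) − v̄(t,y) − |x−y|²/ε² − η(|x|²+|y|²)`. -/
noncomputable def Psi {n : ℕ} (ub vb : ℝ → En n → ℝ) (ε η : ℝ)
    (t : ℝ) (x y : En n) : ℝ :=
  ub t x - vb t y - ‖x - y‖ ^ 2 / ε ^ 2 - η * (‖x‖ ^ 2 + ‖y‖ ^ 2)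

/-- The exponentially transformed generator
`f(t,x,y,z) = 2Cy[F(t,x,(ln y)/(2C), z/(2Cy)) − |z|²/(4Cy²)]` for `y > 0`, `0` otherwise. -/
noncomputable def expGen {n d : ℕ} {A B : Type} (C : ℝ)
    (F : ℝ → En n → ℝ → En d → A → B → ℝ)
    (t : ℝ) (x : En n) (y : ℝ) (z : En d) (α : A) (β : B) : ℝ :=
  if 0 < y then
    2 * C * y * (F t x (Real.log y / (2 * C)) ((1 / (2 * C * y)) • z) α β
      - ‖z‖ ^ 2 / (4 * C * y ^ 2))
  else 0


section SupConvAux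

variable {X : Type*} [MetricSpace X] [Nonempty X]

/-- Sup-convolution `x ↦ ⨆ y, (F y - c * dist x y)`. -/
noncomputable def supConv (F : X → ℝ) (c : ℝ) (x : X) : ℝ :=
  ⨆ y : X, (F y - c * dist x y)

lemma supConv_bddAbove {F : X → ℝ} {M : ℝ} (hM : ∀ x, |F x| ≤ M) {c : ℝ} (hc : 0 ≤ c)
    (x : X) : BddAbove (Set.range fun y => F y - c * dist x y) := by
  refine ⟨M, ?_⟩
  rintro r ⟨y, rfl⟩
  have h1 := (abs_le.1 (hM y)).2
  have h2 : 0 ≤ c * dist x y := mul_nonneg hc dist_nonneg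
  show F y - c * dist x y ≤ M
  linarith

lemma le_supConv {F : X → ℝ} {M : ℝ} (hM : ∀ x, |F x| ≤ M) {c : ℝ} (hc : 0 ≤ c)
    (x : X) : F x ≤ supConv F c x := by
  have := le_ciSup (supConv_bddAbove hM hc x) x
  simpa [supConv, dist_self] using this

lemma supConv_le {F : X → ℝ} {M : ℝ} (hM : ∀ x, |F x| ≤ M) {c : ℝ} (hc : 0 ≤ c)
    (x : X) : supConv F c x ≤ M := by
  refine ciSup_le fun y => ?_
  have h1 := (abs_le.1 (hM y)).2
  have h2 : 0 ≤ c * dist x y := mul_nonneg hc dist_nonneg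
  linarith

lemma supConv_abs_le {F : X → ℝ} {M : ℝ} (hM : ∀ x, |F x| ≤ M) {c : ℝ} (hc : 0 ≤ c)
    (x : X) : |supConv F c x| ≤ M := by
  rw [abs_le]
  refine ⟨?_, supConv_le hM hc x⟩
  have := (abs_le.1 (hM x)).1
  linarith [le_supConv hM hc x]

lemma supConv_le_add {F : X → ℝ} {M : ℝ} (hM : ∀ x, |F x| ≤ M) {c : ℝ} (hc : 0 ≤ c)
    (x x' : X) : supConv F c x ≤ supConv F c x' + c * dist x x' := by
  refine ciSup_le fun y => ?_
  have htri : dist x' y ≤ dist x' x + dist x y := dist_triangle x' x y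
  have hcomm : dist x' x = dist x x' := dist_comm x' x
  have h1 : F y - c * dist x y ≤ (F y - c * dist x' y) + c * dist x x' := by nlinarith
  exact h1.trans (add_le_add_left (le_ciSup (supConv_bddAbove hM hc x') y) _)

lemma supConv_dist_le {F : X → ℝ} {M : ℝ} (hM : ∀ x, |F x| ≤ M) {c : ℝ} (hc : 0 ≤ c)
    (x x' : X) : |supConv F c x - supConv F c x'| ≤ c * dist x x' := by
  rw [abs_sub_le_iff]
  constructor
  · linarith [supConv_le_add hM hc x x']
  · have := supConv_le_add hM hc x' x
    rw [dist_comm x' x] at this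
    linarith

lemma supConv_anti {F : X → ℝ} {M : ℝ} (hM : ∀ x, |F x| ≤ M) {c c' : ℝ} (hc : 0 ≤ c)
    (hcc : c ≤ c') (x : X) : supConv F c' x ≤ supConv F c x := by
  refine ciSup_le fun y => ?_
  have h : F y - c' * dist x y ≤ F y - c * dist x y := by nlinarith [dist_nonneg (x := x) (y := y)]
  exact h.trans (le_ciSup (supConv_bddAbove hM hc x) y)

lemma supConv_uniform [ProperSpace X] {F : X → ℝ} (hF : Continuous F) {M : ℝ}
    (hM : ∀ x, |F x| ≤ M) {K : Set X} (hK : IsCompact K) {ε : ℝ} (hε : 0 < ε) :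
    ∃ P : ℕ, ∀ p : ℕ, P ≤ p → ∀ x ∈ K, supConv F ((p : ℝ) + 1) x - F x ≤ ε := by
  have hK' : IsCompact (Metric.cthickening 1 K) := hK.cthickening
  have huc := hK'.uniformContinuousOn_of_continuous hF.continuousOn
  rw [Metric.uniformContinuousOn_iff] at huc
  obtain ⟨δ, hδ, hucδ⟩ := huc ε hε
  set δ' : ℝ := min δ 1 with hδ'def
  have hδ' : 0 < δ' := lt_min hδ one_pos
  obtain ⟨P, hP⟩ := exists_nat_ge ((2 * M) / δ')
  refine ⟨P, fun p hp x hx => ?_⟩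
  have hxK' : x ∈ Metric.cthickening 1 K :=
    Metric.self_subset_cthickening K hx
  have hc : (0:ℝ) ≤ (p : ℝ) + 1 := by positivity
  have hsup : supConv F ((p : ℝ) + 1) x ≤ F x + ε := by
    refine ciSup_le fun y => ?_
    by_cases hd : dist x y < δ'
    · have hyK' : y ∈ Metric.cthickening 1 K := by
        refine Metric.mem_cthickening_of_dist_le y x 1 K hx ?_
        rw [dist_comm]
        exact le_of_lt (lt_of_lt_of_le hd (min_le_right _ _))
      have := hucδ y hyK' x hxK' (by rw [dist_comm]; exact hd.trans_le (min_le_left _ _))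
      rw [Real.dist_eq] at this
      have h1 := (abs_lt.1 this).2
      have h2 : 0 ≤ ((p : ℝ) + 1) * dist x y := mul_nonneg hc dist_nonneg
      linarith
    · push_neg at hd
      have h1 := (abs_le.1 (hM y)).2
      have h2 := (abs_le.1 (hM x)).1
      have hPp : ((P : ℝ)) ≤ (p : ℝ) := Nat.cast_le.2 hp
      have h3 : 2 * M ≤ (P : ℝ) * δ' := by
        rw [div_le_iff₀ hδ'] at hP; linarith
      have h4 : (P : ℝ) * δ' ≤ ((p : ℝ) + 1) * dist x y := by nlinarith
      linarith
  linarith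

end SupConvAux

/-- Monotone Lipschitz approximation of a bounded continuous
generator vanishing for large `|y|`. -/
theorem monotone_lipschitz_approximation
    {n d : ℕ} (hn : 1 ≤ n) (hd : 1 ≤ d) (T : ℝ) (hT : 0 < T)
    (A B : Type) [MetricSpace A] [CompactSpace A] [Nonempty A]
    [MetricSpace B] [CompactSpace B] [Nonempty B]
    (ft : ℝ → En n → ℝ → En d → A → B → ℝ)
    (Mf : ℝ)
    (hbd : ∀ t ∈ Icc (0:ℝ) T, ∀ (x : En n) (y : ℝ) (z : En d) (α : A) (β : B),
      |ft t x y z α β| ≤ Mf)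
    (hcont : ContinuousOn (fun q : ℝ × En n × ℝ × En d × A × B => ft q.1 q.2.1 q.2.2.1 q.2.2.2.1 q.2.2.2.2.1 q.2.2.2.2.2) (Icc 0 T ×ˢ (univ : Set (En n × ℝ × En d × A × B))))
    (R : ℝ) (hR : 0 < R)
    (hvanish : ∀ t ∈ Icc (0:ℝ) T, ∀ (x : En n) (y : ℝ) (z : En d) (α : A) (β : B),
      R < |y| → ft t x y z α β = 0) :
    ∃ fs : ℕ → ℝ → En n → ℝ → En d → A → B → ℝ,
      (∀ p, ContinuousOn (fun q : ℝ × En n × ℝ × En d × A × B => fs p q.1 q.2.1 q.2.2.1 q.2.2.2.1 q.2.2.2.2.1 q.2.2.2.2.2) (Icc 0 T ×ˢ (univ : Set (En n × ℝ × En d × A × B))))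
      ∧ (∀ p, ∃ Mp, ∀ t ∈ Icc (0:ℝ) T, ∀ (x : En n) (y : ℝ) (z : En d) (α : A) (β : B),
          |fs p t x y z α β| ≤ Mp)
      ∧ (∀ p, ∃ Lp > (0:ℝ), ∀ t ∈ Icc (0:ℝ) T,
          ∀ (x x' : En n) (y y' : ℝ) (z z' : En d) (α : A) (β : B),
          |fs p t x y z α β - fs p t x' y' z' α β|
            ≤ Lp * (‖x - x'‖ + |y - y'| + ‖z - z'‖))
      ∧ (∀ p, ∀ t ∈ Icc (0:ℝ) T, ∀ (x : En n) (y : ℝ) (z : En d) (α : A) (β : B),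
          fs (p+1) t x y z α β ≤ fs p t x y z α β
          ∧ ft t x y z α β ≤ fs p t x y z α β)
      ∧ (∀ Kc : Set (ℝ × En n × ℝ × En d × A × B), IsCompact Kc →
          TendstoUniformlyOn (fun p => fun q : ℝ × En n × ℝ × En d × A × B => fs p q.1 q.2.1 q.2.2.1 q.2.2.2.1 q.2.2.2.2.1 q.2.2.2.2.2)
            (fun q : ℝ × En n × ℝ × En d × A × B => ft q.1 q.2.1 q.2.2.1 q.2.2.2.1 q.2.2.2.2.1 q.2.2.2.2.2) atTop Kc) := by
  classical
  set Q := ℝ × En n × ℝ × En d × A × B with hQ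
  set clamp : ℝ → ℝ := fun t => max 0 (min t T) with hclampdef
  have hclampmem : ∀ t, clamp t ∈ Icc (0:ℝ) T := fun t =>
    ⟨le_max_left _ _, max_le hT.le (min_le_right _ _)⟩
  have hclampeq : ∀ t ∈ Icc (0:ℝ) T, clamp t = t := by
    rintro t ⟨h0, h1⟩
    simp [hclampdef, min_eq_left h1, max_eq_right h0]
  set Fh : Q → ℝ := fun q => ft (clamp q.1) q.2.1 q.2.2.1 q.2.2.2.1 q.2.2.2.2.1 q.2.2.2.2.2
    with hFhdef
  have hFhcont : Continuous Fh := by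
    have hπ : Continuous (fun q : Q => ((clamp q.1, q.2) : ℝ × En n × ℝ × En d × A × B)) := by
      refine Continuous.prodMk ?_ continuous_snd
      exact (continuous_const.max ((continuous_fst).min continuous_const))
    exact hcont.comp_continuous hπ fun q => by
      simp only [Set.mem_prod, Set.mem_univ, and_true]; exact hclampmem _
  have hFhbd : ∀ q : Q, |Fh q| ≤ Mf := fun q =>
    hbd _ (hclampmem _) _ _ _ _ _
  refine ⟨fun p t x y z α β =>
    if t ∈ Icc (0:ℝ) T then supConv Fh ((p : ℝ) + 1) (t, x, y, z, α, β)
    else ft t x y z α β, ?_, ?_, ?_, ?_, ?_⟩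
  · -- continuity
    intro p
    have hc : (0:ℝ) ≤ (p : ℝ) + 1 := by positivity
    have hlip : Continuous (supConv Fh ((p : ℝ) + 1)) := by
      have : LipschitzWith ((p : NNReal) + 1) (supConv Fh ((p : ℝ) + 1)) := by
        refine LipschitzWith.of_dist_le_mul fun q q' => ?_
        have := supConv_dist_le hFhbd hc q q'
        rw [Real.dist_eq]
        simpa using this
      exact this.continuous
    refine (hlip.continuousOn).congr ?_
    rintro ⟨t, x, y, z, α, β⟩ ⟨ht, -⟩
    simp only [if_pos ht]
  · -- boundedness
    intro p
    refine ⟨Mf, fun t ht x y z α β => ?_⟩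
    have hc : (0:ℝ) ≤ (p : ℝ) + 1 := by positivity
    simp only [if_pos ht]
    exact supConv_abs_le hFhbd hc _
  · -- Lipschitz
    intro p
    have hc : (0:ℝ) ≤ (p : ℝ) + 1 := by positivity
    refine ⟨(p : ℝ) + 1, by positivity, fun t ht x x' y y' z z' α β => ?_⟩
    simp only [if_pos ht]
    have hdist : dist ((t, x, y, z, α, β) : Q) ((t, x', y', z', α, β) : Q)
        ≤ ‖x - x'‖ + |y - y'| + ‖z - z'‖ := by
      have h1 : (0:ℝ) ≤ ‖x - x'‖ := norm_nonneg _
      have h2 : (0:ℝ) ≤ |y - y'| := abs_nonneg _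
      have h3 : (0:ℝ) ≤ ‖z - z'‖ := norm_nonneg _
      simp only [Prod.dist_eq, dist_self, Real.dist_eq, dist_eq_norm]
      have h4 : y - y' ≤ |y - y'| := le_abs_self _
      have h5 : -(y - y') ≤ |y - y'| := neg_le_abs _
      repeat' apply max_le
      all_goals first | linarith | (rw [abs_le]; constructor <;> linarith)
    calc |supConv Fh ((p : ℝ) + 1) (t, x, y, z, α, β)
          - supConv Fh ((p : ℝ) + 1) (t, x', y', z', α, β)|
        ≤ ((p : ℝ) + 1) * dist ((t, x, y, z, α, β) : Q) ((t, x', y', z', α, β) : Q) :=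
          supConv_dist_le hFhbd hc _ _
      _ ≤ ((p : ℝ) + 1) * (‖x - x'‖ + |y - y'| + ‖z - z'‖) :=
          mul_le_mul_of_nonneg_left hdist hc
  · -- monotonicity and domination
    intro p t ht x y z α β
    have hc : (0:ℝ) ≤ (p : ℝ) + 1 := by positivity
    simp only [if_pos ht]
    constructor
    · have : ((p : ℝ) + 1) ≤ ((p + 1 : ℕ) : ℝ) + 1 := by push_cast; linarith
      exact supConv_anti hFhbd hc this _
    · have heq : ft t x y z α β = Fh (t, x, y, z, α, β) := by
        simp only [hFhdef, hclampeq t ht]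
      rw [heq]
      exact le_supConv hFhbd hc _
  · -- uniform convergence on compacts
    intro Kc hKc
    rw [Metric.tendstoUniformlyOn_iff]
    intro ε hε
    obtain ⟨P, hP⟩ := supConv_uniform hFhcont hFhbd hKc (half_pos hε)
    filter_upwards [eventually_ge_atTop P] with p hp
    rintro ⟨t, x, y, z, α, β⟩ hq
    by_cases ht : t ∈ Icc (0:ℝ) T
    · simp only [if_pos ht]
      have hc : (0:ℝ) ≤ (p : ℝ) + 1 := by positivity
      have heq : ft t x y z α β = Fh (t, x, y, z, α, β) := by
        simp only [hFhdef, hclampeq t ht]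
      rw [Real.dist_eq, heq]
      have h1 := hP p hp _ hq
      have h2 := le_supConv hFhbd hc ((t, x, y, z, α, β) : Q)
      rw [abs_sub_comm, abs_of_nonneg (by linarith)]
      linarith
    · simp only [if_neg ht, dist_self]
      exact hε
end
end

section
/- Logarithmic transform of subsolutions: assume (H1) and (H2), with C > 0 the constant in the quadratic growth bound for F. Define the exponentially transformed generator f by f(t,x,y,z,α,β) := 2Cy·[F(t, x, (ln y)/(2C), z/(2Cy), α, β) − |z|²/(4Cy²)] for y > 0 and f(t,x,y,z,α,β) := 0 for y ≤ 0 (f is continuous on the region y > 0). Let w : [0,T]×ℝⁿ → ℝ be a viscosity subsolution of the obstacle Isaacs equation E(f, e^{2Ch}, e^{2Ch'}, e^{2Cg}), and suppose e^{2Ch(t,x)} ≤ w(t,x) ≤ e^{2Ch'(t,x)} for all (t,x). Then u := (ln w)/(2C) is a viscosity subsolution of the equation (I⁻). -/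
open Set Filter Topology

noncomputable section

section AuxLemmas

lemma norm_sq_En {d : ℕ} (z : En d) : ‖z‖^2 = ∑ j, (z j)^2 := by
  rw [EuclideanSpace.norm_eq, Real.sq_sqrt (Finset.sum_nonneg fun _ _ => sq_nonneg _)]
  simp [Real.norm_eq_abs, sq_abs]

lemma rowMul_smul {n d : ℕ} (c : ℝ) (q : En n) (S : Matrix (Fin n) (Fin d) ℝ) :
    rowMul (c • q) S = c • rowMul q S := by
  ext j
  simp [rowMul, Finset.mul_sum, PiLp.smul_apply, smul_eq_mul, mul_assoc]

lemma trace_key {n d : ℕ} (S : Matrix (Fin n) (Fin d) ℝ) (M : Matrix (Fin n) (Fin n) ℝ)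
    (q : En n) (a c : ℝ) :
    Matrix.trace (S * S.transpose * (Matrix.of fun i j => a * (M i j + c * q i * q j)))
      = a * Matrix.trace (S * S.transpose * M) + a * c * ∑ j, (rowMul q S j)^2 := by
  have h1 : (Matrix.of fun i j => a * (M i j + c * q i * q j))
      = a • (M + c • Matrix.vecMulVec (fun i => q i) (fun j => q j)) := by
    ext i j
    simp only [Matrix.of_apply, Matrix.smul_apply, Matrix.add_apply, Matrix.vecMulVec_apply,
      smul_eq_mul]
    ring
  rw [h1, Matrix.mul_smul, Matrix.trace_smul, Matrix.mul_add, Matrix.trace_add,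
    Matrix.mul_smul, Matrix.trace_smul]
  have h2 : Matrix.trace (S * S.transpose * Matrix.vecMulVec (fun i => q i) (fun j => q j))
      = ∑ j, (rowMul q S j)^2 := by
    have hR : ∀ j, (rowMul q S j)^2 = ∑ x, ∑ y, (q x * S x j) * (q y * S y j) := by
      intro j
      rw [show (rowMul q S j) = ∑ i, q i * S i j from rfl, sq, Finset.sum_mul_sum]
    simp only [hR, Matrix.trace, Matrix.diag, Matrix.mul_apply, Matrix.vecMulVec_apply,
      Matrix.transpose_apply, Finset.sum_mul, Finset.mul_sum]
    rw [show (∑ x : Fin n, ∑ x1 : Fin n, ∑ i : Fin d, S x i * S x1 i * (q x1 * q x))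
        = ∑ x : Fin n, ∑ i : Fin d, ∑ x1 : Fin n, S x i * S x1 i * (q x1 * q x) from
      Finset.sum_congr rfl fun x _ => Finset.sum_comm, Finset.sum_comm]
    refine Finset.sum_congr rfl fun i _ => ?_
    refine Finset.sum_congr rfl fun x _ => ?_
    refine Finset.sum_congr rfl fun y _ => ?_
    ring
  rw [h2]; simp only [smul_eq_mul]; ring

lemma isC12_exp {n : ℕ} (T C κ : ℝ)
    (φ φt : ℝ → En n → ℝ) (Dφ : ℝ → En n → En n)
    (D2φ : ℝ → En n → Matrix (Fin n) (Fin n) ℝ)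
    (hφ : IsC12 T φ φt Dφ D2φ) :
    IsC12 T (fun s y => κ * Real.exp (2*C*φ s y))
      (fun s y => 2*C*φt s y * (κ * Real.exp (2*C*φ s y)))
      (fun s y => (2*C*(κ * Real.exp (2*C*φ s y))) • Dφ s y)
      (fun s y => Matrix.of fun i j => 2*C*(κ * Real.exp (2*C*φ s y)) *
          (D2φ s y i j + 2*C * Dφ s y i * Dφ s y j)) := by
  have hψc : ContinuousOn (fun p : ℝ × En n => κ * Real.exp (2*C*φ p.1 p.2))
      (Ico 0 T ×ˢ univ) :=
    continuousOn_const.mul (Real.continuous_exp.comp_continuousOn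
      (continuousOn_const.mul hφ.cont))
  refine ⟨hψc, (continuousOn_const.mul hφ.cont_t).mul hψc,
    (continuousOn_const.mul hψc).smul hφ.cont_D, ?_, ?_, ?_, ?_⟩
  · -- cont_D2
    have hent : ∀ i j : Fin n, ContinuousOn
        (fun p : ℝ × En n => 2*C*(κ * Real.exp (2*C*φ p.1 p.2)) *
          (D2φ p.1 p.2 i j + 2*C * Dφ p.1 p.2 i * Dφ p.1 p.2 j)) (Ico 0 T ×ˢ univ) := by
      intro i j
      refine (continuousOn_const.mul hψc).mul (ContinuousOn.add ?_ ?_)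
      · exact ((continuous_apply j).comp (continuous_apply i)).comp_continuousOn hφ.cont_D2
      · exact (continuousOn_const.mul
          ((EuclideanSpace.proj i).continuous.comp_continuousOn hφ.cont_D)).mul
          ((EuclideanSpace.proj j).continuous.comp_continuousOn hφ.cont_D)
    exact continuousOn_pi.2 fun i => continuousOn_pi.2 fun j => hent i j
  · -- deriv_t
    intro t ht x
    have h1 := ((hφ.deriv_t t ht x).const_mul (2*C)).exp.const_mul κ
    exact h1.congr_deriv (by ring)
  · -- grad_x
    intro t ht x
    rw [hasGradientAt_iff_hasFDerivAt]
    have hg := (hφ.grad_x t ht x).hasFDerivAt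
    have hr : HasDerivAt (fun r : ℝ => κ * Real.exp (2*C*r))
        (κ * (Real.exp (2*C*φ t x) * (2*C))) (φ t x) := by
      simpa using (((hasDerivAt_id (φ t x)).const_mul (2*C)).exp.const_mul κ)
    have hcomp := hr.comp_hasFDerivAt x hg
    rw [map_smul]
    exact hcomp.congr_fderiv (by congr 1; ring)
  · -- hess_x
    intro t ht x
    have hg := (hφ.grad_x t ht x).hasFDerivAt
    have hr : HasDerivAt (fun r : ℝ => 2*C*(κ * Real.exp (2*C*r)))
        (2*C*(κ * (Real.exp (2*C*φ t x) * (2*C)))) (φ t x) := by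
      simpa using ((((hasDerivAt_id (φ t x)).const_mul (2*C)).exp.const_mul κ).const_mul (2*C))
    have hc : HasFDerivAt (fun y => 2*C*(κ * Real.exp (2*C*φ t y)))
        ((2*C*(κ * (Real.exp (2*C*φ t x) * (2*C)))) •
          ((InnerProductSpace.toDual ℝ (En n)) (Dφ t x) : En n →L[ℝ] ℝ)) x :=
      hr.comp_hasFDerivAt x hg
    have hf := hφ.hess_x t ht x
    have hprod := hc.smul hf
    refine hprod.congr_fderiv (Eq.symm ?_)
    refine ContinuousLinearMap.ext fun v => ?_
    ext i
    simp only [ContinuousLinearMap.add_apply, ContinuousLinearMap.coe_smul',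
      ContinuousLinearMap.smulRight_apply, ContinuousLinearMap.smul_apply,
      LinearMap.coe_toContinuousLinearMap', Matrix.toEuclideanLin_apply,
      InnerProductSpace.toDual_apply_apply, PiLp.smul_apply, smul_eq_mul, Matrix.mulVec,
      Matrix.of_apply, PiLp.inner_apply, RCLike.inner_apply, conj_trivial,
      PiLp.add_apply, Pi.add_apply,
      Pi.smul_apply]
    simp only [dotProduct]
    rw [Finset.mul_sum, Finset.mul_sum, Finset.sum_mul, ← Finset.sum_add_distrib]
    exact Finset.sum_congr rfl fun j _ => by ring

end AuxLemmas

/-- Logarithmic transform of subsolutions: if `w` is a viscosity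
subsolution of `E(f, e^{2Ch}, e^{2Ch'}, e^{2Cg})` lying between the exponential
obstacles, then `u = (ln w)/(2C)` is a viscosity subsolution of `(I⁻)`. -/
theorem log_transform_subsolution
    {n d : ℕ} (hn : 1 ≤ n) (hd : 1 ≤ d)
    (T : ℝ) (hT : 0 < T)
    (A B : Type) [MetricSpace A] [CompactSpace A] [Nonempty A]
    [MetricSpace B] [CompactSpace B] [Nonempty B]
    (b : ℝ → En n → A → B → En n)
    (σm : ℝ → En n → A → B → Matrix (Fin n) (Fin d) ℝ)
    (F : ℝ → En n → ℝ → En d → A → B → ℝ)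
    (g : En n → ℝ) (h h' : ℝ → En n → ℝ) (C : ℝ)
    (hH1 : HypH1 T A B b σm) (hH2 : HypH2 T C A B g h h' F)
    (w : ℝ → En n → ℝ)
    (hw : IsSubsolution T (Hinf A B b σm (expGen C F))
        (fun t x => Real.exp (2 * C * h t x)) (fun t x => Real.exp (2 * C * h' t x))
        (fun x => Real.exp (2 * C * g x)) w)
    (hbound : ∀ t ∈ Icc (0:ℝ) T, ∀ x : En n,
      Real.exp (2 * C * h t x) ≤ w t x ∧ w t x ≤ Real.exp (2 * C * h' t x)) :
    IsSubsolution T (Hinf A B b σm F) h h' g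
      (fun t x => Real.log (w t x) / (2 * C)) := by
  obtain ⟨-, -, -, -, -, -, -, -, hC, -⟩ := hH2
  have h2C : (0:ℝ) < 2*C := by linarith
  obtain ⟨husc, hterm, htest⟩ := hw
  have hwpos : ∀ t ∈ Icc (0:ℝ) T, ∀ x : En n, 0 < w t x := fun t ht x =>
    lt_of_lt_of_le (Real.exp_pos _) (hbound t ht x).1
  refine ⟨?_, ?_, ?_⟩
  · -- upper semicontinuity
    intro p hp y hy
    have hwp := hwpos p.1 hp.1 p.2
    have hlt : w p.1 p.2 < Real.exp (2*C*y) := by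
      rw [← Real.log_lt_iff_lt_exp hwp]
      have := (div_lt_iff₀ h2C).1 hy
      linarith
    filter_upwards [husc p hp _ hlt, self_mem_nhdsWithin] with q hq hqs
    have hwq := hwpos q.1 hqs.1 q.2
    have hlog := (Real.log_lt_iff_lt_exp hwq).2 hq
    rw [div_lt_iff₀ h2C]
    linarith
  · -- terminal condition
    intro x
    have hwT := hwpos T ⟨hT.le, le_refl T⟩ x
    have hlog := (Real.log_le_iff_le_exp hwT).2 (hterm x)
    rw [div_le_iff₀ h2C]
    linarith
  · -- test functions
    intro φ φt Dφ D2φ hφ t ht x hmax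
    have htI : t ∈ Icc (0:ℝ) T := ⟨ht.1, ht.2.le⟩
    have hwx := hwpos t htI x
    set u0 : ℝ := Real.log (w t x) / (2*C) with hu0
    set κ : ℝ := Real.exp (2*C*(u0 - φ t x)) with hκ
    have hψx : κ * Real.exp (2*C*φ t x) = w t x := by
      rw [hκ, ← Real.exp_add, show 2*C*(u0-φ t x) + 2*C*φ t x = 2*C*u0 by ring,
        show 2*C*u0 = Real.log (w t x) by rw [hu0]; field_simp, Real.exp_log hwx]
    have hψ12 := isC12_exp T C κ φ φt Dφ D2φ hφ
    have hmax' : ∀ s ∈ Ico (0:ℝ) T, ∀ y : En n,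
        w s y - κ * Real.exp (2*C*φ s y) ≤ w t x - κ * Real.exp (2*C*φ t x) := by
      intro s hs y
      have hwsy := hwpos s ⟨hs.1, hs.2.le⟩ y
      have h1 := hmax s hs y
      have h2 : w s y ≤ κ * Real.exp (2*C*φ s y) := by
        rw [hκ, ← Real.exp_add]
        calc w s y = Real.exp (Real.log (w s y)) := (Real.exp_log hwsy).symm
          _ ≤ _ := by
            apply Real.exp_le_exp.2
            have h3 : Real.log (w s y) / (2*C) - φ s y ≤ u0 - φ t x := h1
            have h4 := (div_le_iff₀ h2C).1
              (by linarith : Real.log (w s y) / (2*C) ≤ u0 - φ t x + φ s y)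
            linarith
      rw [hψx]
      linarith
    have hkey := htest (fun s y => κ * Real.exp (2*C*φ s y))
      (fun s y => 2*C*φt s y * (κ * Real.exp (2*C*φ s y)))
      (fun s y => (2*C*(κ * Real.exp (2*C*φ s y))) • Dφ s y)
      (fun s y => Matrix.of fun i j => 2*C*(κ * Real.exp (2*C*φ s y)) *
          (D2φ s y i j + 2*C * Dφ s y i * Dφ s y j))
      hψ12 t ht x hmax'
    simp only [hψx] at hkey
    have hw2 : (0:ℝ) < 2*C*w t x := by positivity
    have hHam : Hinf A B b σm (expGen C F) t x (w t x)
        ((2*C*w t x) • Dφ t x)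
        (Matrix.of fun i j => 2*C*w t x *
          (D2φ t x i j + 2*C * Dφ t x i * Dφ t x j))
        = (2*C*w t x) * Hinf A B b σm F t x u0 (Dφ t x) (D2φ t x) := by
      unfold Hinf
      rw [Real.mul_iSup_of_nonneg hw2.le]
      refine iSup_congr fun α => ?_
      rw [Real.mul_iInf_of_nonneg hw2.le]
      refine iInf_congr fun β => ?_
      rw [trace_key, rowMul_smul, real_inner_smul_right]
      simp only [expGen, if_pos hwx, ← hu0]
      rw [smul_smul, show 1/(2*C*w t x) * (2*C*w t x) = 1 by field_simp, one_smul]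
      rw [norm_smul, Real.norm_eq_abs, abs_of_pos hw2, mul_pow, norm_sq_En]
      field_simp
      ring
    rw [hHam] at hkey
    by_cases hob : w t x ≤ Real.exp (2*C*h t x)
    · have hlog := (Real.log_le_iff_le_exp hwx).2 hob
      have : u0 - h t x ≤ 0 := by
        rw [hu0, sub_nonpos, div_le_iff₀ h2C]
        linarith
      exact (min_le_left _ _).trans this
    · push_neg at hob
      have hmax0 : max (-(2*C*φt t x * w t x)
            - 2*C*w t x * Hinf A B b σm F t x u0 (Dφ t x) (D2φ t x))
          (w t x - Real.exp (2*C*h' t x)) ≤ 0 := by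
        rcases min_le_iff.1 hkey with h1 | h1
        · linarith
        · exact h1
      obtain ⟨hb', hc'⟩ := max_le_iff.1 hmax0
      have hb : -(φt t x) - Hinf A B b σm F t x u0 (Dφ t x) (D2φ t x) ≤ 0 := by
        by_contra hpos
        push_neg at hpos
        nlinarith
      have hc : u0 - h' t x ≤ 0 := by
        have hlog := (Real.log_le_iff_le_exp hwx).2
          (by linarith : w t x ≤ Real.exp (2*C*h' t x))
        rw [hu0, sub_nonpos, div_le_iff₀ h2C]
        linarith
      exact (min_le_right _ _).trans (max_le hb hc)
end
end
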